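/- Let r ∈ ℓ²(2ℤ) with r(k) ≥ 0, and define σ₁(n,s;m) = ∑_{j_1,…,j_s ≠ n} r(m+j_1)/|n−j_1| · r(j_1+j_2)/|n−j_2| ⋯ r(j_{s−1}+j_s)/|n−j_s| with indices in n+2ℤ. Then for n ≥ 4: (i) σ₁(n,1;m) ≤ ‖r‖ for every m; (ii) σ₁(n,1;m) ≤ ρ̃_n := E_n(r) + 2‖r‖/√n whenever |m−n| ≤ n/2; (iii) σ₁(n,2p;m) ≤ (2‖r‖ρ̃_n)^p and σ₁(n,2p+1;m) ≤ ‖r‖·(2‖r‖ρ̃_n)^p for all p ≥ 1 and all m. -/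

import Mathlib

open scoped BigOperators

noncomputable section

open scoped ENNReal NNReal
open MeasureTheory

lemma ennreal_tsum_mul_le {α : Type*} (f g : α → ℝ≥0∞) :
    ∑' i, f i * g i ≤ (∑' i, f i ^ 2) ^ ((1:ℝ)/2) * (∑' i, g i ^ 2) ^ ((1:ℝ)/2) := by
  letI : MeasurableSpace α := ⊤
  have hpq : Real.HolderConjugate 2 2 := Real.HolderConjugate.two_two
  have h := ENNReal.lintegral_mul_le_Lp_mul_Lq (Measure.count : Measure α) hpq
    (measurable_from_top (f := f)).aemeasurable (measurable_from_top (f := g)).aemeasurable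
  rw [lintegral_count' (measurable_from_top), lintegral_count' (measurable_from_top),
    lintegral_count' (measurable_from_top)] at h
  have e2 : ∀ x : ℝ≥0∞, x ^ (2:ℝ) = x ^ (2:ℕ) := fun x => by
    rw [← ENNReal.rpow_natCast]; norm_num
  simp only [Pi.mul_apply, e2] at h
  exact h

lemma sum_inv_sq_le (N : ℕ) : ∑ i ∈ Finset.range N, (1:ℝ)/((i:ℝ)+1)^2 ≤ 2 - 1/(N:ℝ) := by
  induction N with
  | zero => simp
  | succ N ih =>
    rw [Finset.sum_range_succ]
    rcases Nat.eq_zero_or_pos N with h | h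
    · subst h; norm_num
    · have hN : (1:ℝ) ≤ (N:ℝ) := by exact_mod_cast h
      have h1 : (0:ℝ) < N := by linarith
      have h2 : (0:ℝ) < (N:ℝ)+1 := by linarith
      have key : (1:ℝ)/((N:ℝ)+1)^2 ≤ 1/(N:ℝ) - 1/((N:ℝ)+1) := by
        rw [div_sub_div _ _ (ne_of_gt h1) (ne_of_gt h2),
          div_le_div_iff₀ (by positivity) (by positivity)]
        nlinarith
      have hc : ((N+1:ℕ):ℝ) = (N:ℝ)+1 := by push_cast; ring
      rw [hc]
      linarith

lemma tail_sum_le (K : ℕ) (hK : 1 ≤ K) (N : ℕ) :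
    ∑ i ∈ Finset.range N, (1:ℝ)/((K:ℝ)+1+i)^2 ≤ 1/(K:ℝ) - 1/((K:ℝ)+N) := by
  have hK' : (1:ℝ) ≤ (K:ℝ) := by exact_mod_cast hK
  induction N with
  | zero => simp
  | succ N ih =>
    rw [Finset.sum_range_succ]
    have h1 : (0:ℝ) < (K:ℝ)+N := by positivity
    have h2 : (0:ℝ) < (K:ℝ)+N+1 := by positivity
    have key : (1:ℝ)/((K:ℝ)+1+N)^2 ≤ 1/((K:ℝ)+N) - 1/((K:ℝ)+N+1) := by
      rw [div_sub_div _ _ (ne_of_gt h1) (ne_of_gt h2),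
        div_le_div_iff₀ (by positivity) (by positivity)]
      nlinarith
    have hc : ((N+1:ℕ):ℝ) = (N:ℝ)+1 := by push_cast; ring
    rw [hc, ← add_assoc]
    linarith

/-- tail bound in ENNReal: `∑_{a≥0} 1/(2(a+K+1))² ≤ 1/(4K)` for `K ≥ 1`. -/
lemma ennreal_tail_le (K : ℕ) (hK : 1 ≤ K) :
    ∑' a : ℕ, ENNReal.ofReal ((1:ℝ)/(2*((a:ℝ)+K+1))^2) ≤ ENNReal.ofReal (1/(4*(K:ℝ))) := by
  apply ENNReal.tsum_le_of_sum_range_le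
  intro N
  rw [← ENNReal.ofReal_sum_of_nonneg (fun i _ => by positivity)]
  apply ENNReal.ofReal_le_ofReal
  have hK' : (0:ℝ) < (K:ℝ) := by exact_mod_cast hK
  calc ∑ i ∈ Finset.range N, (1:ℝ)/(2*((i:ℝ)+K+1))^2
      = (1/4) * ∑ i ∈ Finset.range N, (1:ℝ)/((K:ℝ)+1+i)^2 := by
        rw [Finset.mul_sum]; apply Finset.sum_congr rfl; intro i _
        rw [show (2*((i:ℝ)+K+1))^2 = 4*(((K:ℝ)+1+i)^2) by ring]
        rw [show (1:ℝ)/(4*(((K:ℝ)+1+i)^2)) = (1/4)*(1/(((K:ℝ)+1+i)^2)) by field_simp]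
    _ ≤ (1/4) * (1/(K:ℝ) - 1/((K:ℝ)+N)) := by
        have := tail_sum_le K hK N; linarith
    _ ≤ 1/(4*(K:ℝ)) := by
        have : (0:ℝ) ≤ 1/((K:ℝ)+N) := by positivity
        rw [show (1:ℝ)/(4*K) = (1/4)*(1/K) by ring]
        nlinarith

/-- `∑_{a≥0} 1/(2(a+1))² ≤ 1/2`. -/
lemma ennreal_base_le :
    ∑' a : ℕ, ENNReal.ofReal ((1:ℝ)/(2*((a:ℝ)+1))^2) ≤ ENNReal.ofReal (1/2) := by
  apply ENNReal.tsum_le_of_sum_range_le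
  intro N
  rw [← ENNReal.ofReal_sum_of_nonneg (fun i _ => by positivity)]
  apply ENNReal.ofReal_le_ofReal
  calc ∑ i ∈ Finset.range N, (1:ℝ)/(2*((i:ℝ)+1))^2
      = (1/4) * ∑ i ∈ Finset.range N, (1:ℝ)/((i:ℝ)+1)^2 := by
        rw [Finset.mul_sum]; apply Finset.sum_congr rfl; intro i _
        rw [show (2*((i:ℝ)+1))^2 = 4*(((i:ℝ)+1)^2) by ring]
        rw [show (1:ℝ)/(4*(((i:ℝ)+1)^2)) = (1/4)*(1/(((i:ℝ)+1)^2)) by field_simp]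
    _ ≤ (1/4) * (2 - 1/(N:ℝ)) := by have := sum_inv_sq_le N; linarith
    _ ≤ 1/2 := by
        have : (0:ℝ) ≤ 1/(N:ℝ) := by positivity
        linarith

lemma Z1 : ∑' k : ℤ, ENNReal.ofReal ((1:ℝ)/(2*(k:ℝ))^2) ≤ 1 := by
  rw [tsum_of_nat_of_neg_add_one ENNReal.summable ENNReal.summable]
  simp only [Int.cast_natCast, Int.cast_neg, Int.cast_add, Int.cast_one, Int.cast_natCast]
  have h1 : ∑' a : ℕ, ENNReal.ofReal ((1:ℝ)/(2*((a:ℕ):ℝ))^2) ≤ ENNReal.ofReal (1/2) := by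
    rw [tsum_eq_zero_add' ENNReal.summable]
    have h0 : ENNReal.ofReal ((1:ℝ)/(2*((0:ℕ):ℝ))^2) = 0 := by norm_num
    rw [h0, zero_add]
    have he : ∀ a : ℕ, ((1:ℝ)/(2*(((a+1:ℕ)):ℝ))^2) = (1:ℝ)/(2*((a:ℝ)+1))^2 := by
      intro a; push_cast; ring_nf
    simp only [he]
    exact ennreal_base_le
  have h2 : ∑' a : ℕ, ENNReal.ofReal ((1:ℝ)/(2*(-((a:ℝ)+1)))^2)
      ≤ ENNReal.ofReal (1/2) := by
    have he : ∀ a : ℕ, ((1:ℝ)/(2*(-((a:ℝ)+1)))^2) = (1:ℝ)/(2*((a:ℝ)+1))^2 := by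
      intro a; ring_nf
    simp only [he]
    exact ennreal_base_le
  refine le_trans (add_le_add h1 h2) ?_
  rw [← ENNReal.ofReal_add (by norm_num) (by norm_num), ← ENNReal.ofReal_one]
  apply ENNReal.ofReal_le_ofReal; norm_num

lemma Z2 (K0 : ℕ) (hK0 : 1 ≤ K0) :
    ∑' k : ℤ, (if (K0:ℤ)+1 ≤ |k| then ENNReal.ofReal ((1:ℝ)/(2*(k:ℝ))^2) else 0)
      ≤ ENNReal.ofReal (1/(2*(K0:ℝ))) := by
  rw [tsum_of_nat_of_neg_add_one ENNReal.summable ENNReal.summable]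
  have h1 : (∑' a : ℕ, (if (K0:ℤ)+1 ≤ |((a:ℕ):ℤ)| then
      ENNReal.ofReal ((1:ℝ)/(2*(((a:ℕ):ℤ):ℝ))^2) else 0)) ≤ ENNReal.ofReal (1/(4*(K0:ℝ))) := by
    rw [← Summable.sum_add_tsum_nat_add' (k := K0+1) ENNReal.summable]
    have hz : ∀ i ∈ Finset.range (K0+1), (if (K0:ℤ)+1 ≤ |((i:ℕ):ℤ)| then
        ENNReal.ofReal ((1:ℝ)/(2*(((i:ℕ):ℤ):ℝ))^2) else 0) = 0 := by
      intro i hi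
      rw [Finset.mem_range] at hi
      rw [if_neg]
      rw [Int.abs_natCast]
      push_cast
      omega
    rw [Finset.sum_eq_zero hz, zero_add]
    have he : ∀ a : ℕ, (if (K0:ℤ)+1 ≤ |(((a + (K0+1)):ℕ):ℤ)| then
        ENNReal.ofReal ((1:ℝ)/(2*((((a + (K0+1)):ℕ):ℤ):ℝ))^2) else 0)
        = ENNReal.ofReal ((1:ℝ)/(2*((a:ℝ)+K0+1))^2) := by
      intro a
      rw [if_pos (by rw [Int.abs_natCast]; push_cast; omega)]
      congr 2
      push_cast
      ring_nf
    simp only [he]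
    exact ennreal_tail_le K0 hK0
  have h2 : (∑' a : ℕ, (if (K0:ℤ)+1 ≤ |(-((a:ℤ)+1))| then
      ENNReal.ofReal ((1:ℝ)/(2*((-((a:ℤ)+1):ℤ):ℝ))^2) else 0)) ≤ ENNReal.ofReal (1/(4*(K0:ℝ))) := by
    rw [← Summable.sum_add_tsum_nat_add' (k := K0) ENNReal.summable]
    have hz : ∀ i ∈ Finset.range K0, (if (K0:ℤ)+1 ≤ |(-((i:ℤ)+1))| then
        ENNReal.ofReal ((1:ℝ)/(2*((-((i:ℤ)+1):ℤ):ℝ))^2) else 0) = 0 := by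
      intro i hi
      rw [Finset.mem_range] at hi
      rw [if_neg]
      rw [abs_neg, abs_of_nonneg (by positivity)]
      push_cast
      omega
    rw [Finset.sum_eq_zero hz, zero_add]
    have he : ∀ a : ℕ, (if (K0:ℤ)+1 ≤ |(-(((a + K0 : ℕ):ℤ)+1))| then
        ENNReal.ofReal ((1:ℝ)/(2*((-(((a + K0 : ℕ):ℤ)+1):ℤ):ℝ))^2) else 0)
        = ENNReal.ofReal ((1:ℝ)/(2*((a:ℝ)+K0+1))^2) := by
      intro a
      rw [if_pos (by rw [abs_neg, abs_of_nonneg (by positivity)]; push_cast; omega)]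
      congr 2
      push_cast
      ring_nf
    simp only [he]
    exact ennreal_tail_le K0 hK0
  refine le_trans (add_le_add h1 h2) ?_
  rw [← ENNReal.ofReal_add (by positivity) (by positivity)]
  apply ENNReal.ofReal_le_ofReal
  have : (0:ℝ) < (K0:ℝ) := by exact_mod_cast hK0
  rw [div_add_div _ _ (by positivity) (by positivity), div_le_div_iff₀ (by positivity) (by positivity)]
  ring_nf
  nlinarith

lemma F1gen {r : ℤ → ℝ} (hr : ∀ k, 0 ≤ r k) (hsum : Summable (fun k => (r k) ^ 2))
    {β : Type*} (w : β → ℤ) (hw : Function.Injective w) (m : ℤ) :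
    ∑' b, (ENNReal.ofReal (r (m + w b)))^2 ≤ ENNReal.ofReal (∑' k : ℤ, r k ^2) := by
  have hinj : Function.Injective (fun b => m + w b) := (add_right_injective m).comp hw
  calc ∑' b, (ENNReal.ofReal (r (m + w b)))^2
      = ∑' b, ENNReal.ofReal (r (m + w b) ^ 2) :=
        tsum_congr (fun b => (ENNReal.ofReal_pow (hr _) 2).symm)
    _ ≤ ∑' k : ℤ, ENNReal.ofReal (r k ^ 2) :=
        ENNReal.tsum_comp_le_tsum_of_injective hinj (fun k => ENNReal.ofReal (r k ^ 2))
    _ = ENNReal.ofReal (∑' k : ℤ, r k ^2) :=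
        (ENNReal.ofReal_tsum_of_nonneg (fun k => sq_nonneg _) hsum).symm

lemma F2gen {r : ℤ → ℝ} (hr : ∀ k, 0 ≤ r k) (hsum : Summable (fun k => (r k) ^ 2))
    {n : ℕ} {β : Type*} (w : β → ℤ) (hw : Function.Injective w) (m : ℤ)
    (hbig : ∀ b, (n:ℤ) ≤ m + w b) :
    ∑' b, (ENNReal.ofReal (r (m + w b)))^2
      ≤ ENNReal.ofReal (∑' i : {i : ℤ // (n:ℤ) ≤ i}, (r i.1) ^ 2) := by
  have hinj : Function.Injective (fun b => (⟨m + w b, hbig b⟩ : {i : ℤ // (n:ℤ) ≤ i})) := by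
    intro a b h
    have : m + w a = m + w b := by simpa using congrArg Subtype.val h
    exact hw (by omega)
  calc ∑' b, (ENNReal.ofReal (r (m + w b)))^2
      = ∑' b, ENNReal.ofReal (r ((⟨m + w b, hbig b⟩ : {i : ℤ // (n:ℤ) ≤ i}).1) ^ 2) :=
        tsum_congr (fun b => (ENNReal.ofReal_pow (hr _) 2).symm)
    _ ≤ ∑' i : {i : ℤ // (n:ℤ) ≤ i}, ENNReal.ofReal ((r i.1) ^ 2) :=
        ENNReal.tsum_comp_le_tsum_of_injective hinj
          (fun i : {i : ℤ // (n:ℤ) ≤ i} => ENNReal.ofReal ((r i.1) ^ 2))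
    _ = ENNReal.ofReal (∑' i : {i : ℤ // (n:ℤ) ≤ i}, (r i.1) ^ 2) :=
        (ENNReal.ofReal_tsum_of_nonneg (fun i => sq_nonneg _) (hsum.subtype _)).symm

lemma phi_eq {n : ℕ} {j : ℤ} (hpar : j % 2 = (n:ℤ) % 2) :
    2 * (((n:ℤ) - j)/2) = (n:ℤ) - j := by omega

lemma phi_cast {n : ℕ} {j : ℤ} (hpar : j % 2 = (n:ℤ) % 2) :
    ((n:ℝ) - (j:ℝ)) = 2*(((((n:ℤ) - j)/2 : ℤ)):ℝ) := by
  have h := phi_eq hpar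
  have : ((2 * (((n:ℤ) - j)/2) : ℤ) : ℝ) = (((n:ℤ) - j : ℤ) : ℝ) := by rw [h]
  push_cast at this
  linarith

lemma gsq_eq {n : ℕ} {j : ℤ} (hpar : j % 2 = (n:ℤ) % 2) :
    (ENNReal.ofReal ((1:ℝ)/|(n:ℝ) - (j:ℝ)|))^2
      = ENNReal.ofReal ((1:ℝ)/(2*(((((n:ℤ) - j)/2 : ℤ)):ℝ))^2) := by
  rw [← ENNReal.ofReal_pow (by positivity)]
  congr 1
  rw [div_pow, one_pow, sq_abs, phi_cast hpar]

lemma G1gen {n : ℕ} {β : Type*} (w : β → ℤ) (hw : Function.Injective w)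
    (hpar : ∀ b, w b % 2 = (n:ℤ) % 2) :
    ∑' b, (ENNReal.ofReal ((1:ℝ)/|(n:ℝ) - ((w b : ℤ):ℝ)|))^2 ≤ 1 := by
  have hφ : Function.Injective (fun b => ((n:ℤ) - w b)/2) := by
    intro a b h
    have ha := phi_eq (hpar a)
    have hb := phi_eq (hpar b)
    simp only at h
    exact hw (by omega)
  calc ∑' b, (ENNReal.ofReal ((1:ℝ)/|(n:ℝ) - ((w b : ℤ):ℝ)|))^2
      = ∑' b, ENNReal.ofReal ((1:ℝ)/(2*(((((n:ℤ) - w b)/2 : ℤ)):ℝ))^2) :=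
        tsum_congr (fun b => gsq_eq (hpar b))
    _ ≤ ∑' k : ℤ, ENNReal.ofReal ((1:ℝ)/(2*(k:ℝ))^2) :=
        ENNReal.tsum_comp_le_tsum_of_injective hφ
          (fun k : ℤ => ENNReal.ofReal ((1:ℝ)/(2*(k:ℝ))^2))
    _ ≤ 1 := Z1

lemma G2gen {n : ℕ} (hn : 4 ≤ n) {β : Type*} (w : β → ℤ) (hw : Function.Injective w)
    (hpar : ∀ b, w b % 2 = (n:ℤ) % 2)
    (hfar : ∀ b, ¬ (|(n:ℝ) - ((w b : ℤ):ℝ)| ≤ (n:ℝ)/2)) :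
    ∑' b, (ENNReal.ofReal ((1:ℝ)/|(n:ℝ) - ((w b : ℤ):ℝ)|))^2
      ≤ ENNReal.ofReal (1/(2*((n/4 : ℕ):ℝ))) := by
  have hK0 : 1 ≤ n/4 := by omega
  have hφ : Function.Injective (fun b => ((n:ℤ) - w b)/2) := by
    intro a b h
    have ha := phi_eq (hpar a)
    have hb := phi_eq (hpar b)
    simp only at h
    exact hw (by omega)
  have hcond : ∀ b, ((n/4 : ℕ):ℤ) + 1 ≤ |((n:ℤ) - w b)/2| := by
    intro b
    rw [Int.add_one_le_iff]
    have h1 : ((n/4:ℕ):ℝ) ≤ (n:ℝ)/4 := Nat.cast_div_le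
    have h3 : (n:ℝ)/2 < |(n:ℝ) - ((w b : ℤ):ℝ)| := lt_of_not_ge (hfar b)
    rw [phi_cast (hpar b), abs_mul, abs_of_nonneg (by norm_num : (0:ℝ) ≤ 2)] at h3
    have h6 : ((n/4:ℕ):ℝ) < |((((n:ℤ) - w b)/2 : ℤ):ℝ)| := by linarith
    have h7 : (((n/4:ℕ):ℤ):ℝ) < ((|((n:ℤ) - w b)/2| : ℤ):ℝ) := by
      rw [Int.cast_abs]
      push_cast
      push_cast at h6
      exact h6
    exact_mod_cast h7
  calc ∑' b, (ENNReal.ofReal ((1:ℝ)/|(n:ℝ) - ((w b : ℤ):ℝ)|))^2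
      = ∑' b, (if ((n/4:ℕ):ℤ)+1 ≤ |((n:ℤ) - w b)/2| then
          ENNReal.ofReal ((1:ℝ)/(2*(((((n:ℤ) - w b)/2 : ℤ)):ℝ))^2) else 0) := by
        refine tsum_congr (fun b => ?_)
        rw [if_pos (hcond b)]
        exact gsq_eq (hpar b)
    _ ≤ ∑' k : ℤ, (if ((n/4:ℕ):ℤ)+1 ≤ |k| then ENNReal.ofReal ((1:ℝ)/(2*(k:ℝ))^2) else 0) :=
        ENNReal.tsum_comp_le_tsum_of_injective hφ
          (fun k : ℤ => if ((n/4:ℕ):ℤ)+1 ≤ |k| then ENNReal.ofReal ((1:ℝ)/(2*(k:ℝ))^2) else 0)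
    _ ≤ ENNReal.ofReal (1/(2*((n/4 : ℕ):ℝ))) := Z2 (n/4) hK0

lemma cs_apply {α : Type*} (f g : α → ℝ≥0∞) {A B : ℝ≥0∞}
    (hA : ∑' i, f i ^ 2 ≤ A) (hB : ∑' i, g i ^ 2 ≤ B) :
    ∑' i, f i * g i ≤ A ^ ((1:ℝ)/2) * B ^ ((1:ℝ)/2) :=
  (ennreal_tsum_mul_le f g).trans
    (mul_le_mul' (ENNReal.rpow_le_rpow hA (by norm_num))
      (ENNReal.rpow_le_rpow hB (by norm_num)))

lemma half_pow {X : ℝ} (hX : 0 ≤ X) :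
    (ENNReal.ofReal X) ^ ((1:ℝ)/2) = ENNReal.ofReal (Real.sqrt X) := by
  rw [ENNReal.ofReal_rpow_of_nonneg hX (by norm_num), Real.sqrt_eq_rpow]

lemma Wsplit {x y : ℝ} (hx : 0 ≤ x) :
    ENNReal.ofReal (x / |y|) = ENNReal.ofReal x * ENNReal.ofReal ((1:ℝ)/|y|) := by
  rw [← ENNReal.ofReal_mul hx]
  congr 1
  rw [mul_one_div]

lemma tsum_W_le {r : ℤ → ℝ} (hr : ∀ k, 0 ≤ r k) {n : ℕ} {β : Type*} (w : β → ℤ) (m : ℤ)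
    {A B : ℝ≥0∞}
    (hA : ∑' b, (ENNReal.ofReal (r (m + w b)))^2 ≤ A)
    (hB : ∑' b, (ENNReal.ofReal ((1:ℝ)/|(n:ℝ) - ((w b : ℤ):ℝ)|))^2 ≤ B) :
    ∑' b, ENNReal.ofReal (r (m + w b) / |(n:ℝ) - ((w b : ℤ):ℝ)|)
      ≤ A ^ ((1:ℝ)/2) * B ^ ((1:ℝ)/2) := by
  calc ∑' b, ENNReal.ofReal (r (m + w b) / |(n:ℝ) - ((w b : ℤ):ℝ)|)
      = ∑' b, ENNReal.ofReal (r (m + w b)) * ENNReal.ofReal ((1:ℝ)/|(n:ℝ) - ((w b : ℤ):ℝ)|) :=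
        tsum_congr (fun b => Wsplit (hr _))
    _ ≤ A ^ ((1:ℝ)/2) * B ^ ((1:ℝ)/2) := cs_apply _ _ hA hB

section E
variable {r : ℤ → ℝ} {n : ℕ}

/-- (i): single sum, any `m`. -/
lemma E1 (hr : ∀ k, 0 ≤ r k) (hsum : Summable (fun k => (r k) ^ 2)) (m : ℤ)
    {β : Type*} (w : β → ℤ) (hw : Function.Injective w)
    (hpar : ∀ b, w b % 2 = (n:ℤ) % 2) :
    ∑' b, ENNReal.ofReal (r (m + w b) / |(n:ℝ) - ((w b : ℤ):ℝ)|)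
      ≤ ENNReal.ofReal (Real.sqrt (∑' k : ℤ, (r k) ^ 2)) := by
  have h := tsum_W_le hr w m (F1gen hr hsum w hw m) (G1gen w hw hpar)
  rwa [half_pow (tsum_nonneg (fun k => sq_nonneg _)), ENNReal.one_rpow, mul_one] at h

/-- near part. -/
lemma Enear (hr : ∀ k, 0 ≤ r k) (hsum : Summable (fun k => (r k) ^ 2)) (m : ℤ)
    {β : Type*} (w : β → ℤ) (hw : Function.Injective w)
    (hpar : ∀ b, w b % 2 = (n:ℤ) % 2)
    (hm : |(m : ℝ) - (n : ℝ)| ≤ (n:ℝ)/2)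
    (hnear : ∀ b, |(n:ℝ) - ((w b : ℤ):ℝ)| ≤ (n:ℝ)/2) :
    ∑' b, ENNReal.ofReal (r (m + w b) / |(n:ℝ) - ((w b : ℤ):ℝ)|)
      ≤ ENNReal.ofReal (Real.sqrt (∑' i : {i : ℤ // (n : ℤ) ≤ i}, (r i.1) ^ 2)) := by
  have hbig : ∀ b, (n:ℤ) ≤ m + w b := by
    intro b
    have h1 := abs_le.1 (hm)
    have h2 := abs_le.1 (hnear b)
    have : (n:ℝ) ≤ (m:ℝ) + ((w b : ℤ):ℝ) := by linarith
    exact_mod_cast this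
  have h := tsum_W_le hr w m (F2gen hr hsum w hw m hbig) (G1gen w hw hpar)
  rwa [half_pow (tsum_nonneg (fun k => sq_nonneg _)), ENNReal.one_rpow, mul_one] at h

/-- far part, any `m`. -/
lemma Efar (hr : ∀ k, 0 ≤ r k) (hsum : Summable (fun k => (r k) ^ 2)) (hn : 4 ≤ n) (m : ℤ)
    {β : Type*} (w : β → ℤ) (hw : Function.Injective w)
    (hpar : ∀ b, w b % 2 = (n:ℤ) % 2)
    (hfar : ∀ b, ¬ (|(n:ℝ) - ((w b : ℤ):ℝ)| ≤ (n:ℝ)/2)) :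
    ∑' b, ENNReal.ofReal (r (m + w b) / |(n:ℝ) - ((w b : ℤ):ℝ)|)
      ≤ ENNReal.ofReal (2 * Real.sqrt (∑' k : ℤ, (r k) ^ 2) / Real.sqrt n) := by
  have h := tsum_W_le hr w m (F1gen hr hsum w hw m) (G2gen hn w hw hpar hfar)
  have hK0 : (0:ℝ) < ((n/4:ℕ):ℝ) := by
    have : 1 ≤ n/4 := by omega
    exact_mod_cast this
  rw [half_pow (tsum_nonneg (fun k => sq_nonneg _)), half_pow (by positivity),
    ← ENNReal.ofReal_mul (Real.sqrt_nonneg _)] at h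
  refine h.trans (ENNReal.ofReal_le_ofReal ?_)
  have hs : Real.sqrt (1/(2*((n/4:ℕ):ℝ))) ≤ 2 / Real.sqrt n := by
    have h48 : (n:ℝ) ≤ 8*((n/4:ℕ):ℝ) := by exact_mod_cast (by omega : n ≤ 8*(n/4))
    have hle : (1:ℝ)/(2*((n/4:ℕ):ℝ)) ≤ 4/(n:ℝ) := by
      rw [div_le_div_iff₀ (by positivity) (by positivity : (0:ℝ) < (n:ℝ))]
      linarith
    have h2 : (2:ℝ)/Real.sqrt n = Real.sqrt (4/(n:ℝ)) := by
      rw [Real.sqrt_div (by norm_num : (0:ℝ) ≤ 4) (n:ℝ)]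
      rw [show (4:ℝ) = 2^2 by norm_num, Real.sqrt_sq (by norm_num : (0:ℝ) ≤ 2)]
    rw [h2]
    exact Real.sqrt_le_sqrt hle
  calc Real.sqrt (∑' k : ℤ, (r k) ^ 2) * Real.sqrt (1/(2*((n/4:ℕ):ℝ)))
      ≤ Real.sqrt (∑' k : ℤ, (r k) ^ 2) * (2 / Real.sqrt n) :=
        mul_le_mul_of_nonneg_left hs (Real.sqrt_nonneg _)
    _ = 2 * Real.sqrt (∑' k : ℤ, (r k) ^ 2) / Real.sqrt n := by ring

end E
/-- The sum `σ₁(n,s;m)` of Lemma p2 (formula (p0)) in the Appendix: summation indices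
`j₁,…,j_s` run over the coset `n + 2ℤ` and are different from `n`; the value is computed
in `ℝ≥0∞` so it is always well defined. -/
noncomputable def sigmaOne (r : ℤ → ℝ) (n : ℕ) (s : ℕ) (m : ℤ) : ENNReal :=
  ∑' j : {f : Fin s → ℤ // ∀ ν, f ν % 2 = (n : ℤ) % 2 ∧ f ν ≠ (n : ℤ)},
    ENNReal.ofReal (∏ ν : Fin s,
      r ((Fin.cons m j.1 : Fin (s + 1) → ℤ) ν.castSucc +
          (Fin.cons m j.1 : Fin (s + 1) → ℤ) ν.succ) /
        |(n : ℝ) - ((j.1 ν : ℤ) : ℝ)|)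


lemma sigma0 (r : ℤ → ℝ) (n : ℕ) (m : ℤ) : sigmaOne r n 0 m = 1 := by
  rw [sigmaOne]
  haveI : Subsingleton {f : Fin 0 → ℤ // ∀ ν, f ν % 2 = (n : ℤ) % 2 ∧ f ν ≠ (n : ℤ)} :=
    ⟨fun a b => Subtype.ext (funext fun ν => ν.elim0)⟩
  have a0 : {f : Fin 0 → ℤ // ∀ ν, f ν % 2 = (n : ℤ) % 2 ∧ f ν ≠ (n : ℤ)} :=
    ⟨fun ν => ν.elim0, fun ν => ν.elim0⟩
  rw [tsum_eq_single a0 (fun b hb => absurd (Subsingleton.elim b a0) hb)]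
  simp

def consEquiv (n s : ℕ) :
    ({j : ℤ // j % 2 = (n : ℤ) % 2 ∧ j ≠ (n : ℤ)} ×
      {f : Fin s → ℤ // ∀ ν, f ν % 2 = (n : ℤ) % 2 ∧ f ν ≠ (n : ℤ)}) ≃
    {f : Fin (s+1) → ℤ // ∀ ν, f ν % 2 = (n : ℤ) % 2 ∧ f ν ≠ (n : ℤ)} where
  toFun p := ⟨Fin.cons p.1.1 p.2.1, fun ν => Fin.cases p.1.2 p.2.2 ν⟩
  invFun f := (⟨f.1 0, f.2 0⟩, ⟨fun ν => f.1 ν.succ, fun ν => f.2 ν.succ⟩)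
  left_inv p := by
    ext
    · simp
    · exact congrFun (by simp) _
  right_inv f := Subtype.ext (Fin.cons_self_tail f.1)

lemma sigma_succ (r : ℤ → ℝ) (hr : ∀ k, 0 ≤ r k) (n : ℕ) (s : ℕ) (m : ℤ) :
    sigmaOne r n (s+1) m = ∑' j : {j : ℤ // j % 2 = (n : ℤ) % 2 ∧ j ≠ (n : ℤ)},
      ENNReal.ofReal (r (m + j.1) / |(n : ℝ) - ((j.1 : ℤ) : ℝ)|) * sigmaOne r n s j.1 := by
  conv_lhs => rw [sigmaOne]
  rw [← Equiv.tsum_eq (consEquiv n s)]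
  rw [ENNReal.tsum_prod']
  refine tsum_congr (fun j => ?_)
  rw [sigmaOne, ← ENNReal.tsum_mul_left]
  refine tsum_congr (fun g => ?_)
  set f : Fin (s+1) → ℤ := Fin.cons j.1 g.1 with hf
  have hprod : (∏ ν : Fin (s+1),
      r ((Fin.cons m f : Fin (s + 2) → ℤ) ν.castSucc +
          (Fin.cons m f : Fin (s + 2) → ℤ) ν.succ) / |(n : ℝ) - ((f ν : ℤ) : ℝ)|)
      = (r (m + j.1) / |(n : ℝ) - ((j.1 : ℤ) : ℝ)|) *
        ∏ ν : Fin s,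
          r ((Fin.cons j.1 g.1 : Fin (s + 1) → ℤ) ν.castSucc +
              (Fin.cons j.1 g.1 : Fin (s + 1) → ℤ) ν.succ) / |(n : ℝ) - ((g.1 ν : ℤ) : ℝ)| := by
    rw [Fin.prod_univ_succ]
    congr 1
  have hnonneg : 0 ≤ r (m + j.1) / |(n : ℝ) - ((j.1 : ℤ) : ℝ)| := div_nonneg (hr _) (abs_nonneg _)
  calc ENNReal.ofReal (∏ ν : Fin (s+1),
        r ((Fin.cons m ((consEquiv n s) (j, g)).1 : Fin (s + 2) → ℤ) ν.castSucc +
            (Fin.cons m ((consEquiv n s) (j, g)).1 : Fin (s + 2) → ℤ) ν.succ) /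
          |(n : ℝ) - ((((consEquiv n s) (j, g)).1 ν : ℤ) : ℝ)|)
      = ENNReal.ofReal ((r (m + j.1) / |(n : ℝ) - ((j.1 : ℤ) : ℝ)|) *
        ∏ ν : Fin s,
          r ((Fin.cons j.1 g.1 : Fin (s + 1) → ℤ) ν.castSucc +
              (Fin.cons j.1 g.1 : Fin (s + 1) → ℤ) ν.succ) /
            |(n : ℝ) - ((g.1 ν : ℤ) : ℝ)|) := by
        rw [← hprod]; rfl
    _ = _ := by
        rw [ENNReal.ofReal_mul hnonneg]

section Assembly
variable {r : ℤ → ℝ} {n : ℕ}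

lemma E1K (hr : ∀ k, 0 ≤ r k) (hsum : Summable (fun k => (r k) ^ 2)) (m : ℤ) :
    ∑' j : {j : ℤ // j % 2 = (n : ℤ) % 2 ∧ j ≠ (n : ℤ)},
      ENNReal.ofReal (r (m + j.1) / |(n : ℝ) - ((j.1 : ℤ) : ℝ)|)
      ≤ ENNReal.ofReal (Real.sqrt (∑' k : ℤ, (r k) ^ 2)) :=
  E1 hr hsum m Subtype.val Subtype.val_injective (fun b => b.2.1)

lemma E2K (hr : ∀ k, 0 ≤ r k) (hsum : Summable (fun k => (r k) ^ 2)) (hn : 4 ≤ n)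
    (m : ℤ) (hm : |(m : ℝ) - (n : ℝ)| ≤ (n:ℝ)/2) :
    ∑' j : {j : ℤ // j % 2 = (n : ℤ) % 2 ∧ j ≠ (n : ℤ)},
      ENNReal.ofReal (r (m + j.1) / |(n : ℝ) - ((j.1 : ℤ) : ℝ)|)
      ≤ ENNReal.ofReal (Real.sqrt (∑' i : {i : ℤ // (n : ℤ) ≤ i}, (r i.1) ^ 2))
        + ENNReal.ofReal (2 * Real.sqrt (∑' k : ℤ, (r k) ^ 2) / Real.sqrt n) := by
  classical
  set S : Set {j : ℤ // j % 2 = (n : ℤ) % 2 ∧ j ≠ (n : ℤ)} :=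
    {j | |(n:ℝ) - ((j.1 : ℤ):ℝ)| ≤ (n:ℝ)/2} with hS
  rw [← Summable.tsum_add_tsum_compl (s := S) ENNReal.summable ENNReal.summable]
  refine add_le_add ?_ ?_
  · exact Enear hr hsum m (fun b : ↥S => b.1.1)
      (Subtype.val_injective.comp Subtype.val_injective)
      (fun b => b.1.2.1) hm (fun b => b.2)
  · exact Efar hr hsum hn m (fun b : ↥(Sᶜ) => b.1.1)
      (Subtype.val_injective.comp Subtype.val_injective)
      (fun b => b.1.2.1) (fun b => b.2)

lemma step2 (hr : ∀ k, 0 ≤ r k) (hsum : Summable (fun k => (r k) ^ 2)) (hn : 4 ≤ n)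
    (s : ℕ) (C : ℝ≥0∞) (hC : ∀ j : ℤ, sigmaOne r n s j ≤ C) (m : ℤ) :
    sigmaOne r n (s+2) m ≤ 2 * ENNReal.ofReal (Real.sqrt (∑' k : ℤ, (r k) ^ 2)) *
      (ENNReal.ofReal (Real.sqrt (∑' i : {i : ℤ // (n : ℤ) ≤ i}, (r i.1) ^ 2))
        + ENNReal.ofReal (2 * Real.sqrt (∑' k : ℤ, (r k) ^ 2) / Real.sqrt n)) * C := by
  classical
  set Rb := ENNReal.ofReal (Real.sqrt (∑' k : ℤ, (r k) ^ 2)) with hRb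
  set ρb := ENNReal.ofReal (Real.sqrt (∑' i : {i : ℤ // (n : ℤ) ≤ i}, (r i.1) ^ 2))
        + ENNReal.ofReal (2 * Real.sqrt (∑' k : ℤ, (r k) ^ 2) / Real.sqrt n) with hρb
  have hT : ∀ j : {j : ℤ // j % 2 = (n : ℤ) % 2 ∧ j ≠ (n : ℤ)},
      sigmaOne r n (s+1) j.1 ≤ (∑' j' : {j : ℤ // j % 2 = (n : ℤ) % 2 ∧ j ≠ (n : ℤ)},
        ENNReal.ofReal (r (j.1 + j'.1) / |(n : ℝ) - ((j'.1 : ℤ) : ℝ)|)) * C := by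
    intro j
    rw [sigma_succ r hr n s j.1]
    calc ∑' j' : {j : ℤ // j % 2 = (n : ℤ) % 2 ∧ j ≠ (n : ℤ)},
          ENNReal.ofReal (r (j.1 + j'.1) / |(n : ℝ) - ((j'.1 : ℤ) : ℝ)|) * sigmaOne r n s j'.1
        ≤ ∑' j' : {j : ℤ // j % 2 = (n : ℤ) % 2 ∧ j ≠ (n : ℤ)},
          ENNReal.ofReal (r (j.1 + j'.1) / |(n : ℝ) - ((j'.1 : ℤ) : ℝ)|) * C :=
          ENNReal.tsum_le_tsum (fun j' => mul_le_mul_right (hC j'.1) _)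
      _ = _ := ENNReal.tsum_mul_right
  rw [show s+2 = (s+1)+1 from rfl, sigma_succ r hr n (s+1) m]
  set S : Set {j : ℤ // j % 2 = (n : ℤ) % 2 ∧ j ≠ (n : ℤ)} :=
    {j | |(n:ℝ) - ((j.1 : ℤ):ℝ)| ≤ (n:ℝ)/2} with hS
  rw [← Summable.tsum_add_tsum_compl (s := S) ENNReal.summable ENNReal.summable]
  have hnear : ∑' (b : ↥S),
      ENNReal.ofReal (r (m + b.1.1) / |(n : ℝ) - ((b.1.1 : ℤ) : ℝ)|) * sigmaOne r n (s+1) b.1.1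
      ≤ Rb * (ρb * C) := by
    have hbd : ∀ b : ↥S, sigmaOne r n (s+1) b.1.1 ≤ ρb * C := by
      intro b
      refine (hT b.1).trans (mul_le_mul_left ?_ C)
      refine E2K hr hsum hn b.1.1 ?_
      have := b.2
      rw [abs_sub_comm]
      exact this
    calc ∑' (b : ↥S),
        ENNReal.ofReal (r (m + b.1.1) / |(n : ℝ) - ((b.1.1 : ℤ) : ℝ)|) * sigmaOne r n (s+1) b.1.1
        ≤ ∑' (b : ↥S),
          ENNReal.ofReal (r (m + b.1.1) / |(n : ℝ) - ((b.1.1 : ℤ) : ℝ)|) * (ρb * C) :=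
          ENNReal.tsum_le_tsum (fun b => mul_le_mul_right (hbd b) _)
      _ = (∑' (b : ↥S), ENNReal.ofReal (r (m + b.1.1) / |(n : ℝ) - ((b.1.1 : ℤ) : ℝ)|)) * (ρb * C) :=
          ENNReal.tsum_mul_right
      _ ≤ Rb * (ρb * C) := by
          refine mul_le_mul_left ?_ _
          exact le_trans (ENNReal.tsum_comp_le_tsum_of_injective Subtype.val_injective
            (fun j : {j : ℤ // j % 2 = (n : ℤ) % 2 ∧ j ≠ (n : ℤ)} =>
              ENNReal.ofReal (r (m + j.1) / |(n : ℝ) - ((j.1 : ℤ) : ℝ)|)))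
            (E1K hr hsum m)
  have hfar : ∑' (b : ↥(Sᶜ)),
      ENNReal.ofReal (r (m + b.1.1) / |(n : ℝ) - ((b.1.1 : ℤ) : ℝ)|) * sigmaOne r n (s+1) b.1.1
      ≤ ρb * (Rb * C) := by
    have hbd : ∀ b : ↥(Sᶜ), sigmaOne r n (s+1) b.1.1 ≤ Rb * C := fun b =>
      (hT b.1).trans (mul_le_mul_left (E1K hr hsum b.1.1) C)
    calc ∑' (b : ↥(Sᶜ)),
        ENNReal.ofReal (r (m + b.1.1) / |(n : ℝ) - ((b.1.1 : ℤ) : ℝ)|) * sigmaOne r n (s+1) b.1.1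
        ≤ ∑' (b : ↥(Sᶜ)),
          ENNReal.ofReal (r (m + b.1.1) / |(n : ℝ) - ((b.1.1 : ℤ) : ℝ)|) * (Rb * C) :=
          ENNReal.tsum_le_tsum (fun b => mul_le_mul_right (hbd b) _)
      _ = (∑' (b : ↥(Sᶜ)), ENNReal.ofReal (r (m + b.1.1) / |(n : ℝ) - ((b.1.1 : ℤ) : ℝ)|)) * (Rb * C) :=
          ENNReal.tsum_mul_right
      _ ≤ ρb * (Rb * C) := by
          refine mul_le_mul_left ?_ _
          refine le_trans (Efar hr hsum hn m (fun b : ↥(Sᶜ) => b.1.1)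
            (Subtype.val_injective.comp Subtype.val_injective)
            (fun b => b.1.2.1) (fun b => b.2)) ?_
          rw [hρb]
          exact le_add_self
  refine le_trans (add_le_add hnear hfar) (le_of_eq ?_)
  ring
end Assembly

theorem sigmaOne_estimates (r : ℤ → ℝ) (hr : ∀ k, 0 ≤ r k)
    (hsum : Summable (fun k => (r k) ^ 2)) (n : ℕ) (hn : 4 ≤ n) :
    (∀ m : ℤ, m % 2 = (n : ℤ) % 2 →
        sigmaOne r n 1 m ≤ ENNReal.ofReal (Real.sqrt (∑' k : ℤ, (r k) ^ 2))) ∧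
    (∀ m : ℤ, m % 2 = (n : ℤ) % 2 → |(m : ℝ) - (n : ℝ)| ≤ (n : ℝ) / 2 →
        sigmaOne r n 1 m ≤ ENNReal.ofReal
          (Real.sqrt (∑' i : {i : ℤ // (n : ℤ) ≤ i}, (r i.1) ^ 2) +
            2 * Real.sqrt (∑' k : ℤ, (r k) ^ 2) / Real.sqrt n)) ∧
    (∀ p : ℕ, 1 ≤ p → ∀ m : ℤ, m % 2 = (n : ℤ) % 2 →
        sigmaOne r n (2 * p) m ≤ ENNReal.ofReal
          ((2 * Real.sqrt (∑' k : ℤ, (r k) ^ 2) *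
            (Real.sqrt (∑' i : {i : ℤ // (n : ℤ) ≤ i}, (r i.1) ^ 2) +
              2 * Real.sqrt (∑' k : ℤ, (r k) ^ 2) / Real.sqrt n)) ^ p) ∧
        sigmaOne r n (2 * p + 1) m ≤ ENNReal.ofReal
          (Real.sqrt (∑' k : ℤ, (r k) ^ 2) *
            (2 * Real.sqrt (∑' k : ℤ, (r k) ^ 2) *
              (Real.sqrt (∑' i : {i : ℤ // (n : ℤ) ≤ i}, (r i.1) ^ 2) +
                2 * Real.sqrt (∑' k : ℤ, (r k) ^ 2) / Real.sqrt n)) ^ p)) := by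
  have hRr0 : 0 ≤ Real.sqrt (∑' k : ℤ, (r k) ^ 2) := Real.sqrt_nonneg _
  have hEr0 : 0 ≤ Real.sqrt (∑' i : {i : ℤ // (n : ℤ) ≤ i}, (r i.1) ^ 2) := Real.sqrt_nonneg _
  have hFr0 : 0 ≤ 2 * Real.sqrt (∑' k : ℤ, (r k) ^ 2) / Real.sqrt n := by positivity
  set Rb : ℝ≥0∞ := ENNReal.ofReal (Real.sqrt (∑' k : ℤ, (r k) ^ 2)) with hRb
  set ρb : ℝ≥0∞ := ENNReal.ofReal (Real.sqrt (∑' i : {i : ℤ // (n : ℤ) ≤ i}, (r i.1) ^ 2))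
        + ENNReal.ofReal (2 * Real.sqrt (∑' k : ℤ, (r k) ^ 2) / Real.sqrt n) with hρb
  set X : ℝ≥0∞ := 2 * Rb * ρb with hX
  -- s = 1 bounds
  have hs1 : ∀ m : ℤ, sigmaOne r n 1 m ≤ Rb := by
    intro m
    refine le_trans (le_of_eq (sigma_succ r hr n 0 m)) ?_
    simp only [sigma0, mul_one]
    exact E1K hr hsum m
  have hs2 : ∀ m : ℤ, |(m : ℝ) - (n : ℝ)| ≤ (n : ℝ) / 2 → sigmaOne r n 1 m ≤ ρb := by
    intro m hm
    refine le_trans (le_of_eq (sigma_succ r hr n 0 m)) ?_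
    simp only [sigma0, mul_one]
    exact E2K hr hsum hn m hm
  -- induction
  have hmain : ∀ p : ℕ, (∀ m : ℤ, sigmaOne r n (2*p) m ≤ X ^ p) ∧
      (∀ m : ℤ, sigmaOne r n (2*p+1) m ≤ Rb * X ^ p) := by
    intro p
    induction p with
    | zero =>
      constructor
      · intro m
        rw [pow_zero]
        exact le_of_eq (sigma0 r n m)
      · intro m
        rw [pow_zero, mul_one]
        exact hs1 m
    | succ p ih =>
      constructor
      · intro m
        have h := step2 hr hsum hn (2*p) (X ^ p) ih.1 m
        refine le_trans h (le_of_eq ?_)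
        rw [hX, pow_succ]
        ring
      · intro m
        have h := step2 hr hsum hn (2*p+1) (Rb * X ^ p) ih.2 m
        refine le_trans h (le_of_eq ?_)
        rw [hX, pow_succ]
        ring
  -- conversions
  have hXeq : X = ENNReal.ofReal (2 * Real.sqrt (∑' k : ℤ, (r k) ^ 2) *
      (Real.sqrt (∑' i : {i : ℤ // (n : ℤ) ≤ i}, (r i.1) ^ 2) +
        2 * Real.sqrt (∑' k : ℤ, (r k) ^ 2) / Real.sqrt n)) := by
    rw [hX, hRb, hρb, ENNReal.ofReal_mul (by positivity), ENNReal.ofReal_mul (by norm_num : (0:ℝ) ≤ 2),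
      ENNReal.ofReal_add hEr0 hFr0, ENNReal.ofReal_ofNat]
  have hXpow : ∀ p : ℕ, X ^ p = ENNReal.ofReal ((2 * Real.sqrt (∑' k : ℤ, (r k) ^ 2) *
      (Real.sqrt (∑' i : {i : ℤ // (n : ℤ) ≤ i}, (r i.1) ^ 2) +
        2 * Real.sqrt (∑' k : ℤ, (r k) ^ 2) / Real.sqrt n)) ^ p) := by
    intro p
    rw [hXeq, ← ENNReal.ofReal_pow (by positivity)]
  refine ⟨fun m _ => hs1 m, fun m _ hm => ?_, fun p _ m _ => ⟨?_, ?_⟩⟩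
  · refine le_trans (hs2 m hm) (le_of_eq ?_)
    rw [hρb, ENNReal.ofReal_add hEr0 hFr0]
  · exact le_trans ((hmain p).1 m) (le_of_eq (hXpow p))
  · refine le_trans ((hmain p).2 m) (le_of_eq ?_)
    rw [hXpow p, hRb, ← ENNReal.ofReal_mul hRr0]
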